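/- (Sibling property) Let L be K45_nD, KD45_nD, or S5_nD, let P ⊆ 𝒫 be finite, k ≥ 2, and δ ∈ D^P_k(L). Let B, C be nonempty subsets of 𝒜 with C₁ = C∩B ≠ ∅ and C₂ = C∩(𝒜∖B) ≠ ∅. Then for every η ∈ R_B(δ) and every χ ∈ R_C(η), there is η₀ ∈ R_{C₁}(δ) such that η₀^↓ = χ (and χ ∈ R_C(η)) and R_D(η₀) = R_D(η) for every nonempty D ⊆ C₂. -/

import Mathlib

/-!
Common framework: multi-agent epistemic modal logic with distributed knowledge.
Agents are `Fin n`, atoms are natural numbers.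
-/

namespace DKLogic

/-- Formulas of the language `L_D`: atoms, negation, conjunction, disjunction and the
distributed-knowledge modality `D_B` for nonempty sets `B` of agents (together with the
constants `⊤`/`⊥`, which the paper uses as the empty conjunction/disjunction). -/
inductive Formula (n : ℕ) : Type
  | top : Formula n
  | bot : Formula n
  | atom : ℕ → Formula n
  | neg : Formula n → Formula n
  | and : Formula n → Formula n → Formula n
  | or : Formula n → Formula n → Formula n
  | D : {B : Finset (Fin n) // B.Nonempty} → Formula n → Formula n

namespace Formula

/-- Modal depth of a formula. -/
def depth {n : ℕ} : Formula n → ℕ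
  | top => 0
  | bot => 0
  | atom _ => 0
  | neg φ => depth φ
  | and φ ψ => max (depth φ) (depth ψ)
  | or φ ψ => max (depth φ) (depth ψ)
  | D _ φ => depth φ + 1

/-- The atoms occurring in a formula. -/
def atoms {n : ℕ} : Formula n → Finset ℕ
  | top => ∅
  | bot => ∅
  | atom q => {q}
  | neg φ => atoms φ
  | and φ ψ => atoms φ ∪ atoms ψ
  | or φ ψ => atoms φ ∪ atoms ψ
  | D _ φ => atoms φ

end Formula

/-- A Kripke model over world type `W` with `n` agents. -/
structure KModel (n : ℕ) (W : Type) where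
  R : Fin n → W → W → Prop
  V : W → Set ℕ

/-- The distributed accessibility relation `R_B = ⋂_{i ∈ B} R_i`. -/
def KModel.RB {n : ℕ} {W : Type} (M : KModel n W) (B : Finset (Fin n)) (s t : W) : Prop :=
  ∀ i ∈ B, M.R i s t

/-- Satisfaction. -/
def Sat {n : ℕ} {W : Type} (M : KModel n W) : W → Formula n → Prop
  | _, .top => True
  | _, .bot => False
  | s, .atom q => q ∈ M.V s
  | s, .neg φ => ¬ Sat M s φ
  | s, .and φ ψ => Sat M s φ ∧ Sat M s ψ
  | s, .or φ ψ => Sat M s φ ∨ Sat M s ψ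
  | s, .D B φ => ∀ t : W, M.RB B.1 s t → Sat M t φ

/-- Seriality of a relation. -/
def Serial {W : Type} (R : W → W → Prop) : Prop := ∀ x, ∃ y, R x y

/-- Euclideanness of a relation. -/
def Euclidean {W : Type} (R : W → W → Prop) : Prop := ∀ x y z, R x y → R x z → R y z

/-- The six modal systems. -/
inductive MSys : Type
  | K | D | T | K45 | KD45 | S5

/-- `L`-models: frame conditions on each accessibility relation for each system. -/
def IsModel {n : ℕ} {W : Type} : MSys → KModel n W → Prop
  | .K, _ => True
  | .D, M => ∀ i, Serial (M.R i)
  | .T, M => ∀ i, Reflexive (M.R i)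
  | .K45, M => ∀ i, Transitive (M.R i) ∧ Euclidean (M.R i)
  | .KD45, M => ∀ i, Serial (M.R i) ∧ Transitive (M.R i) ∧ Euclidean (M.R i)
  | .S5, M => ∀ i, Reflexive (M.R i) ∧ Transitive (M.R i) ∧ Euclidean (M.R i)

/-- Semantic consequence over `L`-models. -/
def Entails {n : ℕ} (L : MSys) (φ ψ : Formula n) : Prop :=
  ∀ (W : Type) (M : KModel n W), IsModel L M → ∀ s : W, Sat M s φ → Sat M s ψ

/-- Semantic equivalence over `L`-models. -/
def EquivL {n : ℕ} (L : MSys) (φ ψ : Formula n) : Prop :=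
  Entails L φ ψ ∧ Entails L ψ φ

/-- `L`-satisfiability. -/
def SatL {n : ℕ} (L : MSys) (φ : Formula n) : Prop :=
  ∃ (W : Type) (M : KModel n W) (s : W), IsModel L M ∧ Sat M s φ

/-- Collective `p`-bisimulation between two pointed models. -/
def CollPBisim {n : ℕ} {W W' : Type} (M : KModel n W) (s : W) (M' : KModel n W') (s' : W')
    (p : ℕ) : Prop :=
  ∃ ρ : W → W' → Prop, ρ s s' ∧
    ∀ u u', ρ u u' →
      ((∀ q : ℕ, q ≠ p → (q ∈ M.V u ↔ q ∈ M'.V u')) ∧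
       (∀ B : Finset (Fin n), B.Nonempty → ∀ v, M.RB B u v → ∃ v', M'.RB B u' v' ∧ ρ v v') ∧
       (∀ B : Finset (Fin n), B.Nonempty → ∀ v', M'.RB B u' v' → ∃ v, M.RB B u v ∧ ρ v v'))

/-- `ψ` is a result of forgetting `p` in `φ` in system `L`
(written `dforget_L(φ,p) ≡_L ψ` in the paper). -/
def IsForget {n : ℕ} (L : MSys) (φ : Formula n) (p : ℕ) (ψ : Formula n) : Prop :=
  ψ.atoms ⊆ φ.atoms.erase p ∧
  (∀ (W W' : Type) (M : KModel n W) (M' : KModel n W') (s : W) (s' : W'),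
      IsModel L M → IsModel L M' → Sat M s φ → CollPBisim M s M' s' p → Sat M' s' ψ) ∧
  (∀ (W' : Type) (M' : KModel n W') (s' : W'),
      IsModel L M' → Sat M' s' ψ →
      ∃ (W : Type) (M : KModel n W) (s : W), IsModel L M ∧ Sat M s φ ∧ CollPBisim M s M' s' p)

/-- `L` is closed under forgetting: `dforget_L(φ,p)` exists (as an `L`-satisfiable formula)
for every `L`-satisfiable `φ` and every atom `p`. -/
def ClosedUnderForgetting {n : ℕ} (L : MSys) : Prop :=
  ∀ (φ : Formula n) (p : ℕ), SatL L φ → ∃ ψ : Formula n, SatL L ψ ∧ IsForget L φ p ψ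

/-- `ψ` is a uniform interpolant of `φ` in `L` over `P \ {p}`. -/
def IsUI {n : ℕ} (L : MSys) (P : Finset ℕ) (p : ℕ) (φ ψ : Formula n) : Prop :=
  SatL L ψ ∧ ψ.atoms ⊆ P.erase p ∧
  ∀ χ : Formula n, p ∉ χ.atoms → (Entails L φ χ ↔ Entails L ψ χ)

/-- The uniform interpolation property for the system `L`. -/
def HasUIP {n : ℕ} (L : MSys) : Prop :=
  ∀ (P : Finset ℕ) (p : ℕ) (φ : Formula n),
    p ∈ P → φ.atoms ⊆ P → SatL L φ → ∃ ψ : Formula n, IsUI L P p φ ψ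

/-! ### Canonical formulas -/

/-- Big conjunction of a list of formulas (`⊤` for the empty list). -/
def bigAnd {n : ℕ} : List (Formula n) → Formula n
  | [] => .top
  | φ :: l => .and φ (bigAnd l)

/-- Big disjunction of a list of formulas (`⊥` for the empty list). -/
def bigOr {n : ℕ} : List (Formula n) → Formula n
  | [] => .bot
  | φ :: l => .or φ (bigOr l)

/-- An injective numerical code of formulas, used to fix a canonical ordering. -/
def fcode {n : ℕ} : Formula n → ℕ
  | .top => Nat.pair 0 0
  | .bot => Nat.pair 1 0
  | .atom q => Nat.pair 2 q
  | .neg φ => Nat.pair 3 (fcode φ)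
  | .and φ ψ => Nat.pair 4 (Nat.pair (fcode φ) (fcode ψ))
  | .or φ ψ => Nat.pair 5 (Nat.pair (fcode φ) (fcode ψ))
  | .D B φ => Nat.pair 6 (Nat.pair (B.1.sum fun i => 2 ^ (i : ℕ)) (fcode φ))

/-- Insert a formula into a strictly `fcode`-sorted list (dropping duplicates). -/
def insertF {n : ℕ} (φ : Formula n) : List (Formula n) → List (Formula n)
  | [] => [φ]
  | ψ :: l =>
      if fcode φ < fcode ψ then φ :: ψ :: l
      else if fcode φ = fcode ψ then ψ :: l
      else ψ :: insertF φ l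

/-- The canonical (sorted, duplicate-free) list representing the set of formulas in `l`. -/
def normList {n : ℕ} (l : List (Formula n)) : List (Formula n) := l.foldr insertF []

/-- The minterm of `P` that is positive exactly on `S`. -/
def minterm {n : ℕ} (P S : Finset ℕ) : Formula n :=
  bigAnd ((P.sort (· ≤ ·)).map fun q =>
    if q ∈ S then Formula.atom q else Formula.neg (Formula.atom q))

/-- The subset of `Fin n` whose characteristic bits are those of `m`. -/
def natToFinset (n m : ℕ) : Finset (Fin n) :=
  Finset.univ.filter fun i => m.testBit (i : ℕ)

/-- A canonical enumeration of all nonempty subsets of the agent set. -/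
def neSubsets (n : ℕ) : List {B : Finset (Fin n) // B.Nonempty} :=
  ((List.range (2 ^ n)).map (natToFinset n)).filterMap fun B =>
    if h : B.Nonempty then some ⟨B, h⟩ else none

/-- `∇_B Φ = D_B (⋁Φ) ∧ ⋀_{φ ∈ Φ} ¬ D_B ¬ φ`. -/
def nabla {n : ℕ} (B : {B : Finset (Fin n) // B.Nonempty}) (Φ : List (Formula n)) : Formula n :=
  Formula.and (Formula.D B (bigOr Φ))
    (bigAnd (Φ.map fun φ => Formula.neg (Formula.D B (Formula.neg φ))))

/-- Underlying data of a d-canonical formula: a set of (positive) atoms together with,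
for every set `B` of agents, a list of successor data. -/
inductive CData (n : ℕ) : Type
  | mk (S : Finset ℕ) (succ : Finset (Fin n) → List (CData n)) : CData n

/-- The positive-atom component. -/
def CData.S {n : ℕ} : CData n → Finset ℕ
  | mk S _ => S

/-- The `B`-successor data. -/
def CData.succ {n : ℕ} : CData n → Finset (Fin n) → List (CData n)
  | mk _ f => f

/-- The d-canonical formula of depth `k` over `P` determined by the data `d`:
`δ_0 ∧ ⋀_{B} ∇_B Φ_B`. -/
def toFormula {n : ℕ} (P : Finset ℕ) : ℕ → CData n → Formula n
  | 0, d => minterm P (d.S ∩ P)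
  | (k+1), d =>
      Formula.and (minterm P (d.S ∩ P))
        (bigAnd ((neSubsets n).map fun B =>
          nabla B (normList ((d.succ B.1).map fun c => toFormula P k c))))

/-- `D^P_k`: the set of d-canonical formulas of depth `k` over `P`. -/
def DP {n : ℕ} (P : Finset ℕ) (k : ℕ) : Set (Formula n) := Set.range (toFormula P k)

/-- `R_B(δ)` for `δ` the level-`k` canonical formula with data `d`:
the set of `B`-successor canonical formulas (of level `k - 1`). -/
def RBset {n : ℕ} (P : Finset ℕ) (k : ℕ) (d : CData n) (B : Finset (Fin n)) :
    Set (Formula n) :=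
  {φ | ∃ c ∈ d.succ B, φ = toFormula P (k - 1) c}

/-- One pruning step `δ ↦ δ^↓` on data (first argument: the level of the input). -/
def downD {n : ℕ} : ℕ → CData n → CData n
  | 0, d => d
  | 1, d => CData.mk d.S (fun _ => [])
  | (k+2), d => CData.mk d.S (fun B => (d.succ B).map fun c => downD (k+1) c)

/-- `l`-fold pruning `δ ↦ δ^{↓l}` on data (first argument: the level of the input). -/
def downIter {n : ℕ} : ℕ → ℕ → CData n → CData n
  | _, 0, d => d
  | k, (l+1), d => downIter (k-1) l (downD k d)

/-- Truncation `δ ↦ δ^{↑l}` on data (first argument: the level of the input). -/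
def upD {n : ℕ} : ℕ → ℕ → CData n → CData n
  | _, 0, d => CData.mk d.S (fun _ => [])
  | 0, (_+1), d => d
  | (k+1), (l+1), d => CData.mk d.S (fun B => (d.succ B).map fun c => upD k l c)

/-- The canonical formula `δ` of level `k` with data `d`. -/
def cf {n : ℕ} (P : Finset ℕ) (k : ℕ) (d : CData n) : Formula n := toFormula P k d

/-- `δ^{↓l}` (a canonical formula of level `k - l`). -/
def cfDown {n : ℕ} (P : Finset ℕ) (k l : ℕ) (d : CData n) : Formula n :=
  toFormula P (k - l) (downIter k l d)

/-- `δ^{↑l}` (a canonical formula of level `min k l`). -/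
def cfUp {n : ℕ} (P : Finset ℕ) (k l : ℕ) (d : CData n) : Formula n :=
  toFormula P (min k l) (upD k l d)

/-- Literal elimination: `φ^p` replaces every occurrence of `¬p` by `⊤` and subsequently
every remaining occurrence of `p` by `⊤`. -/
def elim {n : ℕ} (p : ℕ) : Formula n → Formula n
  | .top => .top
  | .bot => .bot
  | .atom q => if q = p then .top else .atom q
  | .neg (.atom q) => if q = p then .top else .neg (.atom q)
  | .neg φ => .neg (elim p φ)
  | .and φ ψ => .and (elim p φ) (elim p ψ)
  | .or φ ψ => .or (elim p φ) (elim p ψ)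
  | .D B φ => .D B (elim p φ)


/-! ### Auxiliary lemmas for the sibling property -/

section Aux

variable {n : ℕ}

/-- Sum of a range of two-powers. -/
lemma aux_geom (a : ℕ) : ∑ i ∈ Finset.range a, 2 ^ i = 2 ^ a - 1 := by
  induction a with
  | zero => simp
  | succ a ih =>
    rw [Finset.sum_range_succ, ih]
    have : 1 ≤ 2 ^ a := Nat.one_le_two_pow
    have : (2 : ℕ) ^ (a + 1) = 2 ^ a + 2 ^ a := by ring
    omega

lemma aux_sum_two_pow_lt {S : Finset ℕ} {a : ℕ} (h : ∀ i ∈ S, i < a) :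
    ∑ i ∈ S, 2 ^ i < 2 ^ a := by
  have hsub : S ⊆ Finset.range a := fun i hi => Finset.mem_range.2 (h i hi)
  have h1 : ∑ i ∈ S, 2 ^ i ≤ ∑ i ∈ Finset.range a, 2 ^ i :=
    Finset.sum_le_sum_of_subset hsub
  have h2 := aux_geom a
  have : 1 ≤ 2 ^ a := Nat.one_le_two_pow
  omega

lemma aux_testBit_sum (S : Finset ℕ) (j : ℕ) :
    (∑ i ∈ S, 2 ^ i).testBit j = decide (j ∈ S) := by
  induction S using Finset.induction_on_max with
  | empty => simp
  | insert a S ha ih =>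
    have haS : a ∉ S := fun h => lt_irrefl a (ha a h)
    rw [Finset.sum_insert haS]
    have hlt : ∑ i ∈ S, 2 ^ i < 2 ^ a := aux_sum_two_pow_lt ha
    have : (2 : ℕ) ^ a + ∑ i ∈ S, 2 ^ i = 2 ^ a * 1 + ∑ i ∈ S, 2 ^ i := by ring
    rw [this, Nat.testBit_two_pow_mul_add 1 hlt j]
    by_cases hj : j < a
    · have hja : j ≠ a := by omega
      have : j ∈ insert a S ↔ j ∈ S := by simp [Finset.mem_insert, hja]
      simp [hj, ih, this]
    · have hjS : j ∉ S := fun h => hj (ha j h)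
      have hmem : (j ∈ insert a S) ↔ j = a := by simp [Finset.mem_insert, hjS]
      simp only [if_neg hj, hmem]
      rcases Nat.eq_or_lt_of_le (Nat.le_of_not_lt hj) with rfl | hja
      · simp
      · have h1 : j - a ≠ 0 := by omega
        have h2 : Nat.testBit 1 (j - a) = false := by
          apply Nat.testBit_lt_two_pow
          have : 1 ≤ j - a := by omega
          calc (1 : ℕ) < 2 ^ 1 := by norm_num
          _ ≤ 2 ^ (j - a) := Nat.pow_le_pow_right (by norm_num) this
        rw [h2]
        simp
        omega

lemma aux_natToFinset_sum (B : Finset (Fin n)) :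
    natToFinset n (∑ i ∈ B, 2 ^ (i : ℕ)) = B := by
  have himg : ∑ i ∈ B, 2 ^ (i : ℕ) = ∑ j ∈ B.image (Fin.val), 2 ^ j :=
    (Finset.sum_image (fun x _ y _ h => Fin.val_injective h)).symm
  ext i
  simp only [natToFinset, Finset.mem_filter, Finset.mem_univ, true_and]
  rw [himg, aux_testBit_sum]
  simp only [decide_eq_true_eq, Finset.mem_image]
  constructor
  · rintro ⟨x, hx, hxe⟩
    rwa [Fin.val_injective hxe] at hx
  · intro hi; exact ⟨i, hi, rfl⟩

lemma aux_sum_two_pow_inj {B C : Finset (Fin n)}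
    (h : (∑ i ∈ B, 2 ^ (i : ℕ)) = ∑ i ∈ C, 2 ^ (i : ℕ)) : B = C := by
  rw [← aux_natToFinset_sum B, ← aux_natToFinset_sum C, h]

lemma aux_mem_neSubsets (B : {B : Finset (Fin n) // B.Nonempty}) : B ∈ neSubsets n := by
  obtain ⟨B, hB⟩ := B
  unfold neSubsets
  rw [List.mem_filterMap]
  refine ⟨B, ?_, ?_⟩
  · rw [List.mem_map]
    refine ⟨∑ i ∈ B, 2 ^ (i : ℕ), List.mem_range.2 ?_, aux_natToFinset_sum B⟩
    have himg : ∑ i ∈ B, 2 ^ (i : ℕ) = ∑ j ∈ B.image (Fin.val), 2 ^ j :=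
      (Finset.sum_image (fun x _ y _ h => Fin.val_injective h)).symm
    rw [himg]
    apply aux_sum_two_pow_lt
    intro j hj
    simp only [Finset.mem_image] at hj
    obtain ⟨x, _, rfl⟩ := hj
    exact x.isLt
  · rw [dif_pos hB]

lemma fcode_inj : ∀ {φ ψ : Formula n}, fcode φ = fcode ψ → φ = ψ := by
  intro φ
  induction φ with
  | top => intro ψ h; cases ψ <;> first | rfl | simp [fcode, Nat.pair_eq_pair] at h
  | bot => intro ψ h; cases ψ <;> first | rfl | simp [fcode, Nat.pair_eq_pair] at h
  | atom q =>
    intro ψ h; cases ψ <;> simp [fcode, Nat.pair_eq_pair] at h <;> simp [h]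
  | neg φ ih =>
    intro ψ h; cases ψ <;> simp [fcode, Nat.pair_eq_pair] at h <;> simp [ih h]
  | and φ₁ φ₂ ih₁ ih₂ =>
    intro ψ h; cases ψ <;> simp [fcode, Nat.pair_eq_pair] at h <;>
      simp [ih₁ h.1, ih₂ h.2]
  | or φ₁ φ₂ ih₁ ih₂ =>
    intro ψ h; cases ψ <;> simp [fcode, Nat.pair_eq_pair] at h <;>
      simp [ih₁ h.1, ih₂ h.2]
  | D B φ ih =>
    intro ψ h; cases ψ <;> simp [fcode, Nat.pair_eq_pair] at h <;>
      simp [Subtype.ext (aux_sum_two_pow_inj h.1), ih h.2]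

/-! #### `insertF` and `normList` -/

lemma mem_insertF {φ ψ : Formula n} : ∀ {l : List (Formula n)},
    ψ ∈ insertF φ l → ψ = φ ∨ ψ ∈ l := by
  intro l
  induction l with
  | nil => intro h; simp [insertF] at h; exact Or.inl h
  | cons χ l ih =>
    intro h
    rw [insertF] at h
    split at h
    · rcases List.mem_cons.1 h with rfl | h
      · exact Or.inl rfl
      · exact Or.inr h
    · split at h
      · exact Or.inr h
      · rcases List.mem_cons.1 h with rfl | h
        · exact Or.inr (List.mem_cons_self)
        · rcases ih h with h | h
          · exact Or.inl h
          · exact Or.inr (List.mem_cons_of_mem _ h)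

lemma self_mem_insertF (φ : Formula n) : ∀ (l : List (Formula n)), φ ∈ insertF φ l := by
  intro l
  induction l with
  | nil => simp [insertF]
  | cons χ l ih =>
    rw [insertF]
    split
    · exact List.mem_cons_self
    · split
      · next h1 h2 => exact List.mem_cons.2 (Or.inl (fcode_inj h2))
      · exact List.mem_cons_of_mem _ ih

lemma mem_insertF_of_mem {ψ : Formula n} (φ : Formula n) : ∀ {l : List (Formula n)},
    ψ ∈ l → ψ ∈ insertF φ l := by
  intro l
  induction l with
  | nil => intro h; simp at h
  | cons χ l ih =>
    intro h
    rw [insertF]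
    split
    · exact List.mem_cons_of_mem _ h
    · split
      · exact h
      · rcases List.mem_cons.1 h with rfl | h
        · exact List.mem_cons_self
        · exact List.mem_cons_of_mem _ (ih h)

lemma mem_normList {φ : Formula n} : ∀ {l : List (Formula n)},
    φ ∈ normList l ↔ φ ∈ l := by
  intro l
  induction l with
  | nil => simp [normList]
  | cons ψ l ih =>
    show φ ∈ insertF ψ (normList l) ↔ _
    constructor
    · intro h
      rcases mem_insertF h with rfl | h
      · exact List.mem_cons_self
      · exact List.mem_cons_of_mem _ (ih.1 h)
    · intro h
      rcases List.mem_cons.1 h with rfl | h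
      · exact self_mem_insertF _ _
      · exact mem_insertF_of_mem _ (ih.2 h)

lemma pairwise_insertF {φ : Formula n} : ∀ {l : List (Formula n)},
    l.Pairwise (fun a b => fcode a < fcode b) →
    (insertF φ l).Pairwise (fun a b => fcode a < fcode b) := by
  intro l
  induction l with
  | nil => intro _; simp [insertF]
  | cons ψ l ih =>
    intro h
    rw [insertF]
    split
    · next hlt =>
      refine List.Pairwise.cons ?_ h
      intro x hx
      rcases List.mem_cons.1 hx with rfl | hx
      · exact hlt
      · exact lt_trans hlt (List.rel_of_pairwise_cons h hx)
    · split
      · exact h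
      · next h1 h2 =>
        have hgt : fcode ψ < fcode φ := by omega
        refine List.Pairwise.cons ?_ (ih (List.Pairwise.of_cons h))
        intro x hx
        rcases mem_insertF hx with rfl | hx
        · exact hgt
        · exact List.rel_of_pairwise_cons h hx

lemma pairwise_normList : ∀ (l : List (Formula n)),
    (normList l).Pairwise (fun a b => fcode a < fcode b) := by
  intro l
  induction l with
  | nil => simp [normList]
  | cons ψ l ih => exact pairwise_insertF ih

lemma sorted_eq : ∀ {l₁ l₂ : List (Formula n)},
    l₁.Pairwise (fun a b => fcode a < fcode b) →
    l₂.Pairwise (fun a b => fcode a < fcode b) →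
    (∀ φ, φ ∈ l₁ ↔ φ ∈ l₂) → l₁ = l₂ := by
  intro l₁
  induction l₁ with
  | nil =>
    intro l₂ _ _ h
    cases l₂ with
    | nil => rfl
    | cons b l₂ => exact absurd ((h b).2 (List.mem_cons_self)) List.not_mem_nil
  | cons a l₁ ih =>
    intro l₂ h₁ h₂ h
    cases l₂ with
    | nil => exact absurd ((h a).1 (List.mem_cons_self)) List.not_mem_nil
    | cons b l₂ =>
      have hab : a = b := by
        rcases List.mem_cons.1 ((h a).1 (List.mem_cons_self)) with h' | h'
        · exact h'
        · rcases List.mem_cons.1 ((h b).2 (List.mem_cons_self)) with h'' | h''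
          · exact h''.symm
          · exact absurd (List.rel_of_pairwise_cons h₁ h'')
              (Nat.lt_asymm (List.rel_of_pairwise_cons h₂ h'))
      subst hab
      have htail : l₁ = l₂ := by
        refine ih (List.Pairwise.of_cons h₁) (List.Pairwise.of_cons h₂) (fun φ => ⟨?_, ?_⟩)
        · intro hφ
          rcases List.mem_cons.1 ((h φ).1 (List.mem_cons_of_mem _ hφ)) with rfl | h'
          · exact absurd (List.rel_of_pairwise_cons h₁ hφ) (lt_irrefl _)
          · exact h'
        · intro hφ
          rcases List.mem_cons.1 ((h φ).2 (List.mem_cons_of_mem _ hφ)) with rfl | h'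
          · exact absurd (List.rel_of_pairwise_cons h₂ hφ) (lt_irrefl _)
          · exact h'
      rw [htail]

/-! #### Satisfaction lemmas -/

variable {W : Type} {M : KModel n W}

lemma sat_bigAnd {s : W} {l : List (Formula n)} :
    Sat M s (bigAnd l) ↔ ∀ φ ∈ l, Sat M s φ := by
  induction l with
  | nil => simp [bigAnd, Sat]
  | cons φ l ih => simp [bigAnd, Sat, ih]

lemma sat_bigOr {s : W} {l : List (Formula n)} :
    Sat M s (bigOr l) ↔ ∃ φ ∈ l, Sat M s φ := by
  induction l with
  | nil => simp [bigOr, Sat]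
  | cons φ l ih => simp [bigOr, Sat, ih]

lemma sat_nabla {s : W} {B : {B : Finset (Fin n) // B.Nonempty}} {Φ : List (Formula n)} :
    Sat M s (nabla B Φ) ↔
      ((∀ t, M.RB B.1 s t → Sat M t (bigOr Φ)) ∧
       ∀ φ ∈ Φ, ∃ t, M.RB B.1 s t ∧ Sat M t φ) := by
  show (Sat M s (Formula.D B (bigOr Φ)) ∧
      Sat M s (bigAnd (Φ.map fun φ => Formula.neg (Formula.D B (Formula.neg φ))))) ↔ _
  rw [sat_bigAnd]
  constructor
  · rintro ⟨h1, h2⟩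
    refine ⟨h1, fun φ hφ => ?_⟩
    have h3 := h2 _ (List.mem_map.2 ⟨φ, hφ, rfl⟩)
    show ∃ t, M.RB B.1 s t ∧ Sat M t φ
    by_contra hcon
    push_neg at hcon
    exact h3 (fun t ht hsat => hcon t ht hsat)
  · rintro ⟨h1, h2⟩
    refine ⟨h1, fun ψ hψ => ?_⟩
    obtain ⟨φ, hφ, rfl⟩ := List.mem_map.1 hψ
    obtain ⟨t, ht, hsat⟩ := h2 φ hφ
    intro hall
    exact hall t ht hsat

lemma sat_minterm {s : W} {P S : Finset ℕ} :
    Sat M s (minterm P S) ↔ ∀ q ∈ P, (q ∈ S ↔ q ∈ M.V s) := by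
  rw [minterm, sat_bigAnd]
  constructor
  · intro h q hq
    have := h _ (List.mem_map.2 ⟨q, (Finset.mem_sort _).2 hq, rfl⟩)
    by_cases hqS : q ∈ S
    · simp only [if_pos hqS] at this
      exact ⟨fun _ => this, fun _ => hqS⟩
    · simp only [if_neg hqS] at this
      exact ⟨fun h' => absurd h' hqS, fun h' => absurd h' this⟩
  · intro h ψ hψ
    obtain ⟨q, hq, rfl⟩ := List.mem_map.1 hψ
    have hq' := (Finset.mem_sort _).1 hq
    by_cases hqS : q ∈ S
    · simp only [if_pos hqS]
      exact (h q hq').1 hqS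
    · simp only [if_neg hqS]
      exact fun h' => hqS ((h q hq').2 h')

lemma minterm_congr {P S₁ S₂ : Finset ℕ} (h : ∀ q ∈ P, (q ∈ S₁ ↔ q ∈ S₂)) :
    (minterm (n := n) P S₁) = minterm P S₂ := by
  unfold minterm
  refine congrArg bigAnd (List.map_congr_left fun q hq => ?_)
  have hq' := (Finset.mem_sort _).1 hq
  exact if_congr (h q hq') rfl rfl

lemma sat_toFormula_succ {s : W} {P : Finset ℕ} {k : ℕ} {d : CData n}
    (h : Sat M s (toFormula P (k + 1) d)) :
    Sat M s (minterm P (d.S ∩ P)) ∧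
      ∀ B : {B : Finset (Fin n) // B.Nonempty},
        Sat M s (nabla B (normList ((d.succ B.1).map (toFormula P k)))) := by
  simp only [toFormula] at h
  obtain ⟨h1, h2⟩ := h
  refine ⟨h1, fun B => ?_⟩
  exact sat_bigAnd.1 h2 _ (List.mem_map.2 ⟨B, aux_mem_neSubsets B, rfl⟩)

lemma toFormula_unique (P : Finset ℕ) :
    ∀ (k : ℕ) (s : W) (d e : CData n),
      Sat M s (toFormula P k d) → Sat M s (toFormula P k e) →
      toFormula P k d = toFormula P k e := by
  intro k
  induction k with
  | zero =>
    intro s d e hd he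
    simp only [toFormula] at hd he ⊢
    rw [sat_minterm] at hd he
    exact minterm_congr (fun q hq => (hd q hq).trans (he q hq).symm)
  | succ k ih =>
    intro s d e hd he
    have hd' := sat_toFormula_succ hd
    have he' := sat_toFormula_succ he
    simp only [toFormula]
    congr 1
    · exact minterm_congr (fun q hq => ((sat_minterm.1 hd'.1) q hq).trans
        ((sat_minterm.1 he'.1) q hq).symm)
    · refine congrArg bigAnd (List.map_congr_left fun B _ => ?_)
      refine congrArg (nabla B) ?_
      have hdB := hd'.2 B
      have heB := he'.2 B
      rw [sat_nabla] at hdB heB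
      apply sorted_eq (pairwise_normList _) (pairwise_normList _)
      intro φ
      constructor
      · intro hφ
        obtain ⟨t, hRB, hSat⟩ := hdB.2 φ hφ
        obtain ⟨ψ, hψ, hSatψ⟩ := sat_bigOr.1 (heB.1 t hRB)
        obtain ⟨c, hc, rfl⟩ := List.mem_map.1 (mem_normList.1 hφ)
        obtain ⟨c', hc', rfl⟩ := List.mem_map.1 (mem_normList.1 hψ)
        rw [ih t c c' hSat hSatψ]
        exact hψ
      · intro hφ
        obtain ⟨t, hRB, hSat⟩ := heB.2 φ hφ
        obtain ⟨ψ, hψ, hSatψ⟩ := sat_bigOr.1 (hdB.1 t hRB)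
        obtain ⟨c, hc, rfl⟩ := List.mem_map.1 (mem_normList.1 hφ)
        obtain ⟨c', hc', rfl⟩ := List.mem_map.1 (mem_normList.1 hψ)
        rw [ih t c c' hSat hSatψ]
        exact hψ

lemma sat_downD (P : Finset ℕ) :
    ∀ (k : ℕ) (s : W) (d : CData n),
      Sat M s (toFormula P (k + 1) d) → Sat M s (toFormula P k (downD (k + 1) d)) := by
  intro k
  induction k with
  | zero =>
    intro s d h
    simp only [toFormula] at h ⊢
    simp only [downD]
    exact h.1
  | succ k ih =>
    intro s d h
    have h' := sat_toFormula_succ h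
    simp only [downD, toFormula]
    refine ⟨h'.1, ?_⟩
    rw [sat_bigAnd]
    intro ψ hψ
    obtain ⟨B, _, rfl⟩ := List.mem_map.1 hψ
    have hnb := h'.2 B
    rw [sat_nabla] at hnb ⊢
    constructor
    · intro t ht
      obtain ⟨φ, hφ, hSat⟩ := sat_bigOr.1 (hnb.1 t ht)
      obtain ⟨x, hx, rfl⟩ := List.mem_map.1 (mem_normList.1 hφ)
      refine sat_bigOr.2 ⟨toFormula P k (downD (k + 1) x), ?_, ih t x hSat⟩
      exact mem_normList.2 (List.mem_map.2 ⟨downD (k + 1) x,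
        List.mem_map.2 ⟨x, hx, rfl⟩, rfl⟩)
    · intro φ hφ
      obtain ⟨x', hx', rfl⟩ := List.mem_map.1 (mem_normList.1 hφ)
      obtain ⟨x, hx, rfl⟩ := List.mem_map.1 hx'
      obtain ⟨t, ht, hSat⟩ := hnb.2 (toFormula P (k + 1) x)
        (mem_normList.2 (List.mem_map.2 ⟨x, hx, rfl⟩))
      exact ⟨t, ht, ih t x hSat⟩

end Aux

/-- the sibling property. -/
theorem sibling_property {n : ℕ} (L : MSys)
    (hL : L = MSys.K45 ∨ L = MSys.KD45 ∨ L = MSys.S5)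
    (P : Finset ℕ) (k : ℕ) (hk : 2 ≤ k) (d : CData n) (hsat : SatL L (cf P k d))
    (B C : Finset (Fin n)) (hB : B.Nonempty) (hC : C.Nonempty)
    (hC1 : (C ∩ B).Nonempty) (hC2 : (C ∩ Bᶜ).Nonempty)
    (c : CData n) (hc : c ∈ d.succ B)
    (c2 : CData n) (hc2 : c2 ∈ c.succ C) :
    ∃ c0 ∈ d.succ (C ∩ B),
      -- η₀^↓ = χ (which lies in R_C(η))
      cfDown P (k - 1) 1 c0 = toFormula P (k - 2) c2 ∧
      -- R_D(η₀) = R_D(η) for every nonempty D ⊆ C₂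
      ∀ D : Finset (Fin n), D.Nonempty → D ⊆ C ∩ Bᶜ →
        {φ : Formula n | ∃ x ∈ c0.succ D, φ = toFormula P (k - 2) x} =
        {φ : Formula n | ∃ x ∈ c.succ D, φ = toFormula P (k - 2) x} := by
  obtain ⟨m, rfl⟩ : ∃ m, k = m + 2 := ⟨k - 2, by omega⟩
  obtain ⟨W, M, s, hM, hsat⟩ := hsat
  have htrans : ∀ i, Transitive (M.R i) := by
    rcases hL with rfl | rfl | rfl
    exacts [fun i => (hM i).1, fun i => (hM i).2.1, fun i => (hM i).2.1]
  have heucl : ∀ i, Euclidean (M.R i) := by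
    rcases hL with rfl | rfl | rfl
    exacts [fun i => (hM i).2, fun i => (hM i).2.2, fun i => (hM i).2.2]
  have hsat' : Sat M s (toFormula P (m + 2) d) := hsat
  have hs := sat_toFormula_succ hsat'
  -- step to t along B
  have hnbB := hs.2 ⟨B, hB⟩
  rw [sat_nabla] at hnbB
  obtain ⟨t, hst, hSatc⟩ := hnbB.2 (toFormula P (m + 1) c)
    (mem_normList.2 (List.mem_map.2 ⟨c, hc, rfl⟩))
  -- step to u along C
  have ht := sat_toFormula_succ hSatc
  have hnbC := ht.2 ⟨C, hC⟩
  rw [sat_nabla] at hnbC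
  obtain ⟨u, htu, hSatc2⟩ := hnbC.2 (toFormula P m c2)
    (mem_normList.2 (List.mem_map.2 ⟨c2, hc2, rfl⟩))
  -- s reaches u along C ∩ B
  have hsu : M.RB (C ∩ B) s u := by
    intro i hi
    have hiC := (Finset.mem_inter.1 hi).1
    have hiB := (Finset.mem_inter.1 hi).2
    exact htrans i (hst i hiB) (htu i hiC)
  have hnbCB := hs.2 ⟨C ∩ B, hC1⟩
  rw [sat_nabla] at hnbCB
  obtain ⟨η, hη, hSatη⟩ := sat_bigOr.1 (hnbCB.1 u hsu)
  obtain ⟨c0, hc0, rfl⟩ := List.mem_map.1 (mem_normList.1 hη)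
  refine ⟨c0, hc0, ?_, ?_⟩
  · show toFormula P m (downD (m + 1) c0) = toFormula P m c2
    exact toFormula_unique P m u _ c2 (sat_downD P m u c0 hSatη) hSatc2
  · intro D hD hDsub
    have hDC : ∀ i ∈ D, i ∈ C := fun i hi => (Finset.mem_inter.1 (hDsub hi)).1
    have hRDiff : ∀ v, M.RB D t v ↔ M.RB D u v := by
      intro v
      constructor
      · intro hv i hi; exact heucl i t u v (htu i (hDC i hi)) (hv i hi)
      · intro hv i hi; exact htrans i (htu i (hDC i hi)) (hv i hi)
    have hnbD0 := (sat_toFormula_succ hSatη).2 ⟨D, hD⟩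
    have hnbD1 := (sat_toFormula_succ hSatc).2 ⟨D, hD⟩
    rw [sat_nabla] at hnbD0 hnbD1
    ext φ
    simp only [Set.mem_setOf_eq]
    constructor
    · rintro ⟨x, hx, rfl⟩
      obtain ⟨v, hv, hSatx⟩ := hnbD0.2 (toFormula P m x)
        (mem_normList.2 (List.mem_map.2 ⟨x, hx, rfl⟩))
      obtain ⟨ψ, hψ, hSatψ⟩ := sat_bigOr.1 (hnbD1.1 v ((hRDiff v).2 hv))
      obtain ⟨y, hy, rfl⟩ := List.mem_map.1 (mem_normList.1 hψ)
      exact ⟨y, hy, toFormula_unique P m v x y hSatx hSatψ⟩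
    · rintro ⟨x, hx, rfl⟩
      obtain ⟨v, hv, hSatx⟩ := hnbD1.2 (toFormula P m x)
        (mem_normList.2 (List.mem_map.2 ⟨x, hx, rfl⟩))
      obtain ⟨ψ, hψ, hSatψ⟩ := sat_bigOr.1 (hnbD0.1 v ((hRDiff v).1 hv))
      obtain ⟨y, hy, rfl⟩ := List.mem_map.1 (mem_normList.1 hψ)
      exact ⟨y, hy, toFormula_unique P m v x y hSatx hSatψ⟩

end DKLogic
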